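/- Let c_n be a sequence in a field K of characteristic zero with c_0 = 1 such that for every Lie algebra pair morphism φ : g → h and all a₁, a₂ ∈ g, b ∈ h, n ≥ 0: c_n·([φ(a₁),φ(a₂)]@b^n) + ∑_{0≤k,l≤n, k+l≤n} c_k c_{n+1-k} ([φ(a₁)@b^l, φ(a₂)@b^k] - [φ(a₂)@b^l, φ(a₁)@b^k])@b^{n-k-l} = 0 holds as a universal identity (i.e. holds formally in the operad of Lie pairs). Then c_n is uniquely determined; moreover the first values are c_1 = -1/2 and c_2 = 1/12, obtained from 2c_1 = -c_0 and 3c_2 = -c_1 - c_1². -/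

import Mathlib

/-- `iterBracket x b n = x @ b^n`, the `n`-fold iterated bracket `[[…[x,b],…],b]`. -/
def iterBracket {h : Type*} [LieRing h] (x b : h) : ℕ → h
  | 0 => x
  | n + 1 => ⁅iterBracket x b n, b⁆

/-- The universal Jacobi–Bernoulli identity for a sequence `c : ℕ → K`: for every
morphism of Lie algebras `φ : g → h`, all `a₁ a₂ ∈ g`, `b ∈ h` and `n ≥ 0`,
`cₙ·([φa₁,φa₂]@bⁿ) + ∑_{k+l≤n} cₖc_{n+1-k}([φa₁@bˡ,φa₂@bᵏ]-[φa₂@bˡ,φa₁@bᵏ])@b^{n-k-l} = 0`. -/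
def JacobiBernoulliProp (K : Type) [Field K] [CharZero K] (c : ℕ → K) : Prop :=
  ∀ (g h : Type) [LieRing g] [LieAlgebra K g] [LieRing h] [LieAlgebra K h]
    (φ : g →ₗ⁅K⁆ h) (a₁ a₂ : g) (b : h) (n : ℕ),
    c n • iterBracket ⁅φ a₁, φ a₂⁆ b n +
      ∑ k ∈ Finset.range (n + 1), ∑ l ∈ Finset.range (n + 1 - k),
        (c k * c (n + 1 - k)) •
          iterBracket
            (⁅iterBracket (φ a₁) b l, iterBracket (φ a₂) b k⁆ -
              ⁅iterBracket (φ a₂) b l, iterBracket (φ a₁) b k⁆) b (n - k - l) = 0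

lemma iterBracket_zero_left {h : Type*} [LieRing h] (b : h) (m : ℕ) :
    iterBracket (0 : h) b m = 0 := by
  induction m with
  | zero => rfl
  | succ m ih => show ⁅iterBracket (0:h) b m, b⁆ = 0; rw [ih, zero_lie]

lemma iterBracket_smul {K h : Type*} [CommRing K] [LieRing h] [LieAlgebra K h]
    (t : K) (x b : h) (m : ℕ) : iterBracket (t • x) b m = t • iterBracket x b m := by
  induction m with
  | zero => rfl
  | succ m ih => show ⁅iterBracket (t • x) b m, b⁆ = t • ⁅iterBracket x b m, b⁆
                 rw [ih, smul_lie]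

lemma iterBracket_fixed {h : Type*} [LieRing h] (x b : h) (hx : ⁅x, b⁆ = x) (m : ℕ) :
    iterBracket x b m = x := by
  induction m with
  | zero => rfl
  | succ m ih => show ⁅iterBracket x b m, b⁆ = x; rw [ih, hx]

lemma iterBracket_self {h : Type*} [LieRing h] (b : h) (k : ℕ) :
    iterBracket b b k = if k = 0 then b else 0 := by
  induction k with
  | zero => rfl
  | succ k ih =>
      show ⁅iterBracket b b k, b⁆ = _
      rw [ih]
      rcases Nat.eq_zero_or_pos k with hk | hk
      · simp [hk]
      · simp [Nat.pos_iff_ne_zero.mp hk]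

/-- The recursion forced by the universal identity, extracted from the 2-dimensional
solvable Lie algebra `⟨x, b⟩` with `⁅x, b⁆ = x`. -/
lemma jacobiBernoulli_recursion (K : Type) [Field K] [CharZero K] (c : ℕ → K)
    (hc : JacobiBernoulliProp K c) (hc0 : c 0 = 1) (n : ℕ) :
    c n + ((n : K) + 2) * c (n + 1) + ∑ k ∈ Finset.range n, c (k + 1) * c (n - k) = 0 := by
  classical
  letI : LieRing (Matrix (Fin 2) (Fin 2) K) := LieRing.ofAssociativeRing
  set x : Matrix (Fin 2) (Fin 2) K := !![0,1;0,0] with hxdef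
  set b : Matrix (Fin 2) (Fin 2) K := !![0,0;0,1] with hbdef
  have hxb : ⁅x, b⁆ = x := by
    ext i j
    fin_cases i <;> fin_cases j <;>
      simp [Ring.lie_def, hxdef, hbdef, Matrix.sub_apply, Matrix.mul_apply,
        Fin.sum_univ_two]
  have hbx : ⁅b, x⁆ = -x := by rw [← lie_skew, hxb]
  have key := hc (Matrix (Fin 2) (Fin 2) K) (Matrix (Fin 2) (Fin 2) K)
    (LieHom.id) x b b n
  simp only [LieHom.coe_id, id_eq] at key
  rw [hxb, iterBracket_fixed x b hxb] at key
  -- rewrite every summand as a scalar multiple of x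
  have hsummand : ∀ k ∈ Finset.range (n + 1), ∀ l ∈ Finset.range (n + 1 - k),
      (c k * c (n + 1 - k)) •
        iterBracket (⁅iterBracket x b l, iterBracket b b k⁆ -
          ⁅iterBracket b b l, iterBracket x b k⁆) b (n - k - l) =
      (c k * c (n + 1 - k) *
        ((if k = 0 then (1:K) else 0) + (if l = 0 then (1:K) else 0))) • x := by
    intro k _ l _
    have hinner : ⁅iterBracket x b l, iterBracket b b k⁆ -
        ⁅iterBracket b b l, iterBracket x b k⁆ =
        ((if k = 0 then (1:K) else 0) + (if l = 0 then (1:K) else 0)) • x := by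
      rw [iterBracket_fixed x b hxb, iterBracket_fixed x b hxb,
        iterBracket_self, iterBracket_self]
      rcases eq_or_ne k 0 with hk | hk <;> rcases eq_or_ne l 0 with hl | hl <;>
        simp [hk, hl, hxb, hbx, add_smul]
    rw [hinner, iterBracket_smul, iterBracket_fixed x b hxb, smul_smul]
  rw [Finset.sum_congr rfl (fun k hk => Finset.sum_congr rfl (hsummand k hk))] at key
  have key2 : (c n + ∑ k ∈ Finset.range (n + 1), ∑ l ∈ Finset.range (n + 1 - k),
      c k * c (n + 1 - k) *
        ((if k = 0 then (1:K) else 0) + (if l = 0 then (1:K) else 0))) • x = 0 := by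
    rw [add_smul, Finset.sum_smul]
    simp only [Finset.sum_smul]
    exact key
  -- extract the (0,1) entry
  have hscal : c n + ∑ k ∈ Finset.range (n + 1), ∑ l ∈ Finset.range (n + 1 - k),
      c k * c (n + 1 - k) *
        ((if k = 0 then (1:K) else 0) + (if l = 0 then (1:K) else 0)) = 0 := by
    have h3 := congrFun (congrFun key2 0) 1
    simpa [hxdef] using h3
  -- compute the double sum
  have hsum : ∑ k ∈ Finset.range (n + 1), ∑ l ∈ Finset.range (n + 1 - k),
      c k * c (n + 1 - k) *
        ((if k = 0 then (1:K) else 0) + (if l = 0 then (1:K) else 0)) =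
      ((n : K) + 2) * c (n + 1) + ∑ k ∈ Finset.range n, c (k + 1) * c (n - k) := by
    rw [Finset.sum_range_succ']
    have h0 : ∑ l ∈ Finset.range (n + 1 - 0),
        c 0 * c (n + 1 - 0) * ((if (0:ℕ) = 0 then (1:K) else 0) +
          (if l = 0 then (1:K) else 0)) = ((n : K) + 2) * c (n + 1) := by
      simp only [Nat.sub_zero, if_pos rfl, hc0, one_mul, mul_add, mul_one,
        mul_ite, mul_zero, Finset.sum_add_distrib, Finset.sum_const,
        Finset.card_range, nsmul_eq_mul]
      rw [Finset.sum_ite_eq' (Finset.range (n+1)) 0 (fun _ => c (n+1))]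
      simp only [Finset.mem_range, Nat.succ_pos, if_pos, Nat.zero_lt_succ]
      push_cast
      ring
    have hk : ∀ k ∈ Finset.range n, ∑ l ∈ Finset.range (n + 1 - (k + 1)),
        c (k + 1) * c (n + 1 - (k + 1)) * ((if k + 1 = 0 then (1:K) else 0) +
          (if l = 0 then (1:K) else 0)) = c (k + 1) * c (n - k) := by
      intro k hkmem
      have hnk : n + 1 - (k + 1) = n - k := by omega
      have hpos : 0 < n - k := by
        simp only [Finset.mem_range] at hkmem; omega
      simp only [hnk, Nat.succ_ne_zero, if_false, zero_add, mul_ite, mul_one, mul_zero]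
      rw [Finset.sum_ite_eq' (Finset.range (n - k)) 0
        (fun _ => c (k + 1) * c (n - k))]
      simp [Finset.mem_range, hpos]
    rw [Finset.sum_congr rfl hk, h0]
    ring
  rw [hsum] at hscal
  linear_combination hscal

/-- A sequence with `c 0 = 1` satisfying the universal Jacobi–Bernoulli
identity is unique; its first values are `c 1 = -1/2` and `c 2 = 1/12`. -/
theorem jacobiBernoulli_sequence_unique (K : Type) [Field K] [CharZero K]
    (c d : ℕ → K) (hc : JacobiBernoulliProp K c) (hd : JacobiBernoulliProp K d)
    (hc0 : c 0 = 1) (hd0 : d 0 = 1) :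
    c = d ∧ c 1 = -(1 / 2) ∧ c 2 = 1 / 12 := by
  have hrc := jacobiBernoulli_recursion K c hc hc0
  have hrd := jacobiBernoulli_recursion K d hd hd0
  have hne : ∀ n : ℕ, ((n : K) + 2) ≠ 0 := by
    intro n
    have h2 : ((n : K) + 2) = ((n + 2 : ℕ) : K) := by push_cast; ring
    rw [h2]
    exact Nat.cast_ne_zero.mpr (by omega)
  have hc1 : c 1 = -(1 / 2) := by
    have h := hrc 0
    simp only [Finset.range_zero, Finset.sum_empty, Nat.cast_zero, hc0] at h
    linear_combination (1/2 : K) * h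
  have hc2 : c 2 = 1 / 12 := by
    have h := hrc 1
    rw [Finset.sum_range_one] at h
    norm_num [hc1] at h
    linear_combination (1/3 : K) * h
  refine ⟨?_, hc1, hc2⟩
  funext n
  induction n using Nat.strong_induction_on with
  | _ n ih =>
    match n with
    | 0 => rw [hc0, hd0]
    | Nat.succ m =>
      have h1 := hrc m
      have h2 := hrd m
      have hsum : ∑ k ∈ Finset.range m, c (k + 1) * c (m - k) =
          ∑ k ∈ Finset.range m, d (k + 1) * d (m - k) := by
        apply Finset.sum_congr rfl
        intro k hk
        simp only [Finset.mem_range] at hk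
        rw [ih (k + 1) (by omega), ih (m - k) (by omega)]
      have hcm : c m = d m := ih m (by omega)
      have : ((m : K) + 2) * c (m + 1) = ((m : K) + 2) * d (m + 1) := by
        rw [hcm, hsum] at h1
        linear_combination h1 - h2
      exact mul_left_cancel₀ (hne m) this
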